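/- Let (λ_j)_{j≥1} be a summable sequence of nonnegative real numbers that is not identically zero, and let B > 0. For each real n > 0, let ε_n denote the unique positive solution of Σ_{j=1}^∞ min{λ_j, ε²} = n · B · ε⁴. Then ε_n is strictly decreasing in n: for all reals n′ > n > 0 one has ε_{n′} < ε_n. -/
import Mathlib


open Real Filter

/-- Distinct eigenvalues (up to constants) of the NTK on the sphere `S^d`:
`ν_d(k) = d^d · k^(k−2) · (k+d)^(−(k+d+1)) · (k² + k·d + d)`. -/
noncomputable def nuNT (d k : ℕ) : ℝ :=
  (d : ℝ) ^ (d : ℝ) * (k : ℝ) ^ ((k : ℝ) - 2) *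
    ((k : ℝ) + (d : ℝ)) ^ (-((k : ℝ) + (d : ℝ) + 1)) *
    ((k : ℝ) ^ 2 + (k : ℝ) * (d : ℝ) + (d : ℝ))

/-- Dimension of the space of spherical harmonics of degree `k` on `S^d ⊆ ℝ^(d+1)`. -/
def Nsph (d k : ℕ) : ℕ :=
  if k = 0 then 1
  else (k + d).choose k - (if 2 ≤ k then (k + d - 2).choose (k - 2) else 0)

/-- `λ_d(0) = 1` and `λ_d(k) = ν_d(k)` for `k ≥ 1`. -/
noncomputable def lamNT (d k : ℕ) : ℝ := if k = 0 then 1 else nuNT d k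


lemma key_le (l a b : ℝ) (hl : 0 ≤ l) (ha : 0 < a) (hab : a ≤ b) :
    min l (b^2) * a^4 ≤ min l (a^2) * b^4 := by
  have hab2 : a^2 ≤ b^2 := by nlinarith
  rcases le_or_gt l (a^2) with h | h
  · have h2 : l ≤ b^2 := h.trans hab2
    rw [min_eq_left h, min_eq_left h2]
    have : a^4 ≤ b^4 := by nlinarith
    exact mul_le_mul_of_nonneg_left this hl
  · rw [min_eq_right h.le]
    have hm : min l (b^2) ≤ b^2 := min_le_right _ _
    have h1 : min l (b^2) * a^4 ≤ b^2 * a^4 :=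
      mul_le_mul_of_nonneg_right hm (by positivity)
    have h2 : b^2 * a^4 ≤ a^2 * b^4 := by nlinarith [mul_nonneg (mul_nonneg (sq_nonneg a) (sq_nonneg b)) (sub_nonneg.mpr hab2)]
    linarith

lemma key_lt (l a b : ℝ) (hl : 0 < l) (ha : 0 < a) (hab : a < b) :
    min l (b^2) * a^4 < min l (a^2) * b^4 := by
  have hb : 0 < b := ha.trans hab
  have hab2 : a^2 < b^2 := by nlinarith
  rcases le_or_gt l (a^2) with h | h
  · have h2 : l ≤ b^2 := h.trans hab2.le
    rw [min_eq_left h, min_eq_left h2]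
    have : a^4 < b^4 := by nlinarith
    exact mul_lt_mul_of_pos_left this hl
  · rw [min_eq_right h.le]
    have hm : min l (b^2) ≤ b^2 := min_le_right _ _
    have h1 : min l (b^2) * a^4 ≤ b^2 * a^4 :=
      mul_le_mul_of_nonneg_right hm (by positivity)
    have h2 : b^2 * a^4 < a^2 * b^4 := by nlinarith [mul_pos (mul_pos (mul_pos ha ha) (mul_pos hb hb)) (sub_pos.mpr hab2)]
    linarith

/-- If ε_n denotes the unique positive solution of Σ_j min{λ_j, ε²} = n·B·ε⁴, then ε_n is
strictly decreasing in n > 0. -/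
theorem mendelson_solution_strict_anti (lam : ℕ → ℝ) (hnonneg : ∀ j, 0 ≤ lam j)
    (hsum : Summable lam) (hne : ∃ j, lam j ≠ 0) (B : ℝ) (hB : 0 < B)
    (eps : ℝ → ℝ)
    (heps : ∀ n : ℝ, 0 < n →
      0 < eps n ∧ (∑' j : ℕ, min (lam j) ((eps n) ^ 2)) = n * B * (eps n) ^ 4) :
    ∀ n n' : ℝ, 0 < n → n < n' → eps n' < eps n := by
  intro n n' hn hnn'
  obtain ⟨ha, hea⟩ := heps n hn
  obtain ⟨hb, heb⟩ := heps n' (hn.trans hnn')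
  by_contra hcon
  push_neg at hcon
  set a := eps n with hadef
  set b := eps n' with hbdef
  have hsumA : Summable (fun j => min (lam j) (a^2) * b^4) := by
    apply Summable.mul_right
    exact hsum.of_nonneg_of_le (fun j => le_min (hnonneg j) (by positivity))
      (fun j => min_le_left _ _)
  have hsumB : Summable (fun j => min (lam j) (b^2) * a^4) := by
    apply Summable.mul_right
    exact hsum.of_nonneg_of_le (fun j => le_min (hnonneg j) (by positivity))
      (fun j => min_le_left _ _)
  rcases eq_or_lt_of_le hcon with heq | hlt
  · rw [← heq] at heb
    have heq2 := hea.symm.trans heb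
    nlinarith [mul_pos (sub_pos.mpr hnn') (mul_pos hB (pow_pos ha 4))]
  · obtain ⟨j0, hj0⟩ := hne
    have hj0' : 0 < lam j0 := lt_of_le_of_ne (hnonneg j0) (Ne.symm hj0)
    have hstrict : ∑' j, min (lam j) (b^2) * a^4 < ∑' j, min (lam j) (a^2) * b^4 :=
      Summable.tsum_lt_tsum (fun j => key_le (lam j) a b (hnonneg j) ha hlt.le)
        (key_lt (lam j0) a b hj0' ha hlt) hsumB hsumA
    rw [tsum_mul_right, tsum_mul_right, hea, heb] at hstrict
    nlinarith [mul_pos (sub_pos.mpr hnn') (mul_pos hB (mul_pos (pow_pos ha 4) (pow_pos hb 4)))]
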